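/- Let (X,d) be a geodesic metric space that is δ-thin-hyperbolic. Then for every λ ≥ 1 and S > 0 there exists a constant H = H(δ, λ, S) > 0 such that any two (λ,S)-quasi-geodesics γ: [a,b] → X and γ': [a',b'] → X with the same start point (γ(a) = γ'(a')) and the same end point (γ(b) = γ'(b')) have images at Hausdorff distance at most H from each other. -/

import Mathlib

/-- `γ` is a geodesic segment from `x` to `y`, parametrized by arclength on `[0, dist x y]`. -/
def IsGeodesicSegment {X : Type*} [MetricSpace X] (γ : ℝ → X) (x y : X) : Prop :=
  γ 0 = x ∧ γ (dist x y) = y ∧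
    ∀ s ∈ Set.Icc (0 : ℝ) (dist x y), ∀ t ∈ Set.Icc (0 : ℝ) (dist x y),
      dist (γ s) (γ t) = |s - t|

/-- A metric space is geodesic if any two points are joined by a geodesic segment. -/
def GeodesicSpace (X : Type*) [MetricSpace X] : Prop :=
  ∀ x y : X, ∃ γ : ℝ → X, IsGeodesicSegment γ x y

/-- `X` is `δ`-thin-hyperbolic: for every geodesic triangle, each point on any one of the
three sides lies within distance `δ` of the union of the other two sides. -/
def ThinTriangles (X : Type*) [MetricSpace X] (δ : ℝ) : Prop :=
  ∀ (a b c : X) (γab γbc γca : ℝ → X),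
    IsGeodesicSegment γab a b → IsGeodesicSegment γbc b c → IsGeodesicSegment γca c a →
    (∀ s ∈ Set.Icc (0 : ℝ) (dist a b),
      Metric.infDist (γab s) (γbc '' Set.Icc 0 (dist b c) ∪ γca '' Set.Icc 0 (dist c a)) ≤ δ) ∧
    (∀ s ∈ Set.Icc (0 : ℝ) (dist b c),
      Metric.infDist (γbc s) (γab '' Set.Icc 0 (dist a b) ∪ γca '' Set.Icc 0 (dist c a)) ≤ δ) ∧
    (∀ s ∈ Set.Icc (0 : ℝ) (dist c a),
      Metric.infDist (γca s) (γab '' Set.Icc 0 (dist a b) ∪ γbc '' Set.Icc 0 (dist b c)) ≤ δ)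

/-- `γ` restricted to `[a, b]` is a `(λ, S)`-quasi-geodesic:
`λ⁻¹|s−t| − S ≤ d(γ s, γ t) ≤ λ|s−t| + S` for all `s, t ∈ [a, b]`. -/
def IsQuasiGeodesicOn {X : Type*} [MetricSpace X] (lam S : ℝ) (γ : ℝ → X) (a b : ℝ) : Prop :=
  ∀ s ∈ Set.Icc a b, ∀ t ∈ Set.Icc a b,
    lam⁻¹ * |s - t| - S ≤ dist (γ s) (γ t) ∧ dist (γ s) (γ t) ≤ lam * |s - t| + S

universe u

namespace StabAux

open Metric Set

variable {X : Type*} [MetricSpace X]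

lemma le_infDist' {s : Set X} {x : X} {r : ℝ} (hs : s.Nonempty)
    (h : ∀ y ∈ s, r ≤ dist x y) : r ≤ Metric.infDist x s := by
  by_contra hc
  push_neg at hc
  obtain ⟨y, hy, hlt⟩ := (Metric.infDist_lt_iff hs).1 hc
  exact absurd (h y hy) (by linarith)

lemma geo_reverse {σ : ℝ → X} {x y : X} (h : IsGeodesicSegment σ x y) :
    IsGeodesicSegment (fun u => σ (dist x y - u)) y x := by
  obtain ⟨h0, h1, h2⟩ := h
  refine ⟨by simpa using h1, by simp [dist_comm y x, h0], ?_⟩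
  intro s hs t ht
  rw [dist_comm y x] at hs ht
  rw [h2 _ ⟨by linarith [hs.2], by linarith [hs.1]⟩ _ ⟨by linarith [ht.2], by linarith [ht.1]⟩]
  rw [abs_sub_comm]
  ring_nf

lemma geo_compact_image {σ : ℝ → X} {x y : X} (h : IsGeodesicSegment σ x y) :
    IsCompact (σ '' Set.Icc 0 (dist x y)) := by
  refine isCompact_Icc.image_of_continuousOn ?_
  have : LipschitzOnWith 1 σ (Set.Icc 0 (dist x y)) := by
    refine LipschitzOnWith.of_dist_le_mul fun s hs t ht => ?_
    rw [h.2.2 s hs t ht]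
    simp [Real.dist_eq]
  exact this.continuousOn

lemma geo_image_nonempty {σ : ℝ → X} {x y : X} (h : IsGeodesicSegment σ x y) :
    (σ '' Set.Icc 0 (dist x y)).Nonempty :=
  ⟨σ 0, ⟨0, ⟨le_refl _, dist_nonneg⟩, rfl⟩⟩


variable {δ lam S : ℝ}

/-- Discrete exponential contraction lemma: a point on a geodesic joining the endpoints of a
coarsely-Lipschitz path lies within `δ * log₂(length) + (lam + S)` of the path. -/
lemma contraction (hgeo : GeodesicSpace X) (hthin : ThinTriangles X δ)
    (hδ : 0 ≤ δ) (hlam : 1 ≤ lam) (hS : 0 < S) :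
    ∀ n : ℕ, ∀ (f : ℝ → X) (T : ℝ), 0 ≤ T → T ≤ n →
      (∀ u ∈ Set.Icc (0:ℝ) T, ∀ v ∈ Set.Icc (0:ℝ) T, dist (f u) (f v) ≤ lam * |u - v| + S) →
      ∀ σ : ℝ → X, IsGeodesicSegment σ (f 0) (f T) →
      ∀ s ∈ Set.Icc (0:ℝ) (dist (f 0) (f T)),
        Metric.infDist (σ s) (f '' Set.Icc 0 T) ≤ δ * (Nat.clog 2 n) + (lam + S) := by
  intro n
  induction n using Nat.strong_induction_on with
  | _ n IH =>
  intro f T hT0 hTn hf σ hσ s hs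
  have himg : f 0 ∈ f '' Set.Icc 0 T := ⟨0, ⟨le_refl _, hT0⟩, rfl⟩
  by_cases hn : n ≤ 1
  · -- base case : T ≤ 1
    have hT1 : T ≤ 1 := hTn.trans (by exact_mod_cast hn)
    have hd : dist (f 0) (f T) ≤ lam + S := by
      have := hf 0 ⟨le_refl _, hT0⟩ T ⟨hT0, le_refl _⟩
      have habs : |(0:ℝ) - T| = T := by rw [abs_sub_comm]; simp [abs_of_nonneg hT0]
      rw [habs] at this
      nlinarith
    have : dist (σ s) (f 0) = s := by
      rw [← hσ.1]
      rw [hσ.2.2 s hs 0 ⟨le_refl _, dist_nonneg⟩]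
      simp [abs_of_nonneg hs.1]
    have h1 : Metric.infDist (σ s) (f '' Set.Icc 0 T) ≤ lam + S := by
      refine le_trans (Metric.infDist_le_dist_of_mem himg) ?_
      rw [this]; exact hs.2.trans hd
    have : (0:ℝ) ≤ δ * (Nat.clog 2 n) := by positivity
    linarith
  · -- inductive step, n ≥ 2
    push_neg at hn
    set m : ℕ := (n + 1) / 2 with hm
    have hmlt : m < n := by omega
    have hclog : Nat.clog 2 n = Nat.clog 2 m + 1 := by
      rw [Nat.clog_of_two_le (by norm_num) (by omega)]
      have h22 : (n + 2 - 1) / 2 = m := by omega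
      rw [h22]
    have hmn : (n : ℝ) ≤ 2 * m := by
      have : n ≤ 2 * m := by omega
      exact_mod_cast this
    set M : ℝ := T / 2 with hM
    have hM0 : 0 ≤ M := by positivity
    have hMm : M ≤ m := by
      have : (0:ℝ) ≤ m := Nat.cast_nonneg m
      rw [hM]; linarith
    have hMT : M ≤ T := by rw [hM]; linarith
    -- sub-paths
    have hf1 : ∀ u ∈ Set.Icc (0:ℝ) M, ∀ v ∈ Set.Icc (0:ℝ) M,
        dist (f u) (f v) ≤ lam * |u - v| + S := fun u hu v hv =>
      hf u ⟨hu.1, hu.2.trans hMT⟩ v ⟨hv.1, hv.2.trans hMT⟩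
    set f2 : ℝ → X := fun v => f (M + v) with hf2def
    have hf2 : ∀ u ∈ Set.Icc (0:ℝ) M, ∀ v ∈ Set.Icc (0:ℝ) M,
        dist (f2 u) (f2 v) ≤ lam * |u - v| + S := by
      intro u hu v hv
      have := hf (M + u) ⟨by linarith [hu.1], by rw [hM] at hu ⊢; linarith [hu.2]⟩
        (M + v) ⟨by linarith [hv.1], by rw [hM] at hv ⊢; linarith [hv.2]⟩
      simpa [add_sub_add_left_eq_sub] using this
    have hf20 : f2 0 = f M := by simp [hf2def]
    have hf2M : f2 M = f T := by
      have : M + M = T := by rw [hM]; ring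
      simp [hf2def, this]
    -- geodesics on the two halves
    obtain ⟨σ1, hσ1⟩ := hgeo (f 0) (f M)
    obtain ⟨σ2, hσ2⟩ := hgeo (f M) (f T)
    -- thin triangle with reversed σ
    set L : ℝ := dist (f 0) (f T) with hL
    have hσrev := geo_reverse hσ
    have hthin3 := (hthin (f 0) (f M) (f T) σ1 σ2 (fun u => σ (L - u)) hσ1 hσ2 hσrev).2.2
    have hLs : L - s ∈ Set.Icc (0:ℝ) (dist (f T) (f 0)) := by
      rw [dist_comm]
      exact ⟨by linarith [hs.2], by linarith [hs.1]⟩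
    have hkey := hthin3 (L - s) hLs
    have hσs : σ (L - (L - s)) = σ s := by ring_nf
    rw [show L - (L - s) = s by ring] at hkey
    -- extract a nearby point on one of the two half-geodesics
    set U : Set X := σ1 '' Set.Icc 0 (dist (f 0) (f M)) ∪ σ2 '' Set.Icc 0 (dist (f M) (f T))
      with hU
    have hUc : IsCompact U := (geo_compact_image hσ1).union (geo_compact_image hσ2)
    have hUne : U.Nonempty := (geo_image_nonempty hσ1).mono Set.subset_union_left
    obtain ⟨p, hp, hpd⟩ := hUc.exists_infDist_eq_dist hUne (σ s)
    have hdp : dist (σ s) p ≤ δ := by rw [← hpd]; exact hkey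
    -- apply IH to the half containing p
    have hrec : Metric.infDist p (f '' Set.Icc 0 T) ≤ δ * (Nat.clog 2 m) + (lam + S) := by
      rcases hp with hp1 | hp2
      · obtain ⟨u, hu, hpu⟩ := hp1
        have := IH m hmlt f M hM0 hMm hf1 σ1 hσ1 u hu
        rw [hpu] at this
        refine le_trans (Metric.infDist_le_infDist_of_subset ?_ ?_) this
        · exact Set.image_mono (Set.Icc_subset_Icc le_rfl hMT)
        · exact ⟨f 0, 0, ⟨le_refl _, hM0⟩, rfl⟩
      · obtain ⟨u, hu, hpu⟩ := hp2
        have hσ2' : IsGeodesicSegment σ2 (f2 0) (f2 M) := by rw [hf20, hf2M]; exact hσ2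
        have hu' : u ∈ Set.Icc (0:ℝ) (dist (f2 0) (f2 M)) := by rw [hf20, hf2M]; exact hu
        have := IH m hmlt f2 M hM0 hMm hf2 σ2 hσ2' u hu'
        rw [hpu] at this
        refine le_trans (Metric.infDist_le_infDist_of_subset ?_ ?_) this
        · rintro _ ⟨v, hv, rfl⟩
          exact ⟨M + v, ⟨by linarith [hv.1], by rw [hM] at hv ⊢; linarith [hv.2]⟩, rfl⟩
        · exact ⟨f2 0, 0, ⟨le_refl _, hM0⟩, rfl⟩
    calc Metric.infDist (σ s) (f '' Set.Icc 0 T)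
        ≤ Metric.infDist p (f '' Set.Icc 0 T) + dist (σ s) p :=
          Metric.infDist_le_infDist_add_dist
      _ ≤ (δ * (Nat.clog 2 m) + (lam + S)) + δ := by linarith
      _ ≤ δ * (Nat.clog 2 n) + (lam + S) := by
          rw [hclog]; push_cast; ring_nf; linarith

noncomputable def C1 (lam S : ℝ) : ℝ := lam * (16 + S)
noncomputable def C2 (δ lam S : ℝ) : ℝ := 1 + δ + lam + S + 2 * δ * C1 lam S
noncomputable def D0 (δ lam S : ℝ) : ℝ := (C2 δ lam S + 4 * δ) ^ 2 + lam + S + 2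

lemma C1_ge (hlam : 1 ≤ lam) (hS : 0 < S) : 16 ≤ C1 lam S := by
  have : (16:ℝ) + S ≥ 16 := by linarith
  calc (16:ℝ) = 1 * 16 := by ring
  _ ≤ lam * (16 + S) := by nlinarith
  _ = C1 lam S := rfl

lemma C2_ge (hδ : 0 ≤ δ) (hlam : 1 ≤ lam) (hS : 0 < S) : 1 ≤ C2 δ lam S := by
  have h1 := C1_ge hlam hS
  have : 0 ≤ 2 * δ * C1 lam S := by nlinarith
  unfold C2; linarith

lemma D0_ge (hδ : 0 ≤ δ) (hlam : 1 ≤ lam) (hS : 0 < S) : 1 + lam + S ≤ D0 δ lam S := by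
  have : (0:ℝ) ≤ (C2 δ lam S + 4 * δ) ^ 2 := sq_nonneg _
  unfold D0; linarith

set_option maxHeartbeats 2000000 in
/-- **Part 1**: every point of a geodesic lies within `D0` of the quasi-geodesic joining
its endpoints. -/
lemma part1 (hgeo : GeodesicSpace X) (hthin : ThinTriangles X δ)
    (hδ : 0 ≤ δ) (hlam : 1 ≤ lam) (hS : 0 < S)
    {a b : ℝ} (hab : a ≤ b) {γ : ℝ → X} (hγ : IsQuasiGeodesicOn lam S γ a b)
    {σ : ℝ → X} (hσ : IsGeodesicSegment σ (γ a) (γ b)) :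
    ∀ s ∈ Set.Icc (0:ℝ) (dist (γ a) (γ b)),
      Metric.infDist (σ s) (γ '' Set.Icc a b) ≤ D0 δ lam S := by
  classical
  set L : ℝ := dist (γ a) (γ b) with hLdef
  set Γ : Set X := γ '' Set.Icc a b with hΓdef
  have hΓne : Γ.Nonempty := ⟨γ a, a, ⟨le_refl _, hab⟩, rfl⟩
  have hL0 : 0 ≤ L := dist_nonneg
  have dσ : ∀ p ∈ Set.Icc (0:ℝ) L, ∀ q ∈ Set.Icc (0:ℝ) L, dist (σ p) (σ q) = |p - q| := hσ.2.2
  -- the sup of distances from the geodesic to Γ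
  set V : Set ℝ := (fun s => Metric.infDist (σ s) Γ) '' Set.Icc 0 L with hVdef
  have hVne : V.Nonempty := ⟨_, 0, ⟨le_refl _, hL0⟩, rfl⟩
  have hVbdd : BddAbove V := by
    refine ⟨L, ?_⟩
    rintro _ ⟨s, hs, rfl⟩
    have h1 : Metric.infDist (σ s) Γ ≤ dist (σ s) (γ a) :=
      Metric.infDist_le_dist_of_mem ⟨a, ⟨le_refl _, hab⟩, rfl⟩
    have h2 : dist (σ s) (γ a) = s := by
      rw [← hσ.1, dσ s hs 0 ⟨le_refl _, hL0⟩]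
      simp [abs_of_nonneg hs.1]
    rw [h2] at h1; exact h1.trans hs.2
  set D : ℝ := sSup V with hDdef
  have hDle : ∀ s ∈ Set.Icc (0:ℝ) L, Metric.infDist (σ s) Γ ≤ D :=
    fun s hs => le_csSup hVbdd ⟨s, hs, rfl⟩
  suffices hDD0 : D ≤ D0 δ lam S by
    intro s hs; exact (hDle s hs).trans hDD0
  by_cases hD1 : D ≤ 1
  · have := D0_ge (lam := lam) (S := S) hδ hlam hS; linarith
  push_neg at hD1
  -- a near maximizing point x0
  obtain ⟨_, ⟨s0, hs0mem, rfl⟩, hs0⟩ := exists_lt_of_lt_csSup hVne (show D - 1 < D by linarith)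
  set x0 : X := σ s0 with hx0
  have hlbΓ : ∀ t ∈ Set.Icc a b, D - 1 ≤ dist x0 (γ t) := by
    intro t ht
    have : Metric.infDist x0 Γ ≤ dist x0 (γ t) :=
      Metric.infDist_le_dist_of_mem ⟨t, ht, rfl⟩
    linarith
  set R : ℝ := 2 * D + 2 with hRdef
  have hRpos : 0 < R := by linarith
  set sy : ℝ := max (s0 - R) 0 with hsydef
  set sz : ℝ := min (s0 + R) L with hszdef
  have hsy0 : 0 ≤ sy := le_max_right _ _
  have hsys0 : sy ≤ s0 := max_le (by linarith) hs0mem.1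
  have hs0sz : s0 ≤ sz := le_min (by linarith) hs0mem.2
  have hszL : sz ≤ L := min_le_right _ _
  have hsymem : sy ∈ Set.Icc (0:ℝ) L := ⟨hsy0, hsys0.trans hs0mem.2⟩
  have hszmem : sz ∈ Set.Icc (0:ℝ) L := ⟨hs0sz.trans' hs0mem.1, hszL⟩
  have hszsy : sz - sy ≤ 2 * R := by
    have h1 : s0 - R ≤ sy := le_max_left _ _
    have h2 : sz ≤ s0 + R := min_le_left _ _
    linarith
  -- choose endpoints of the middle part on the quasi-geodesic
  have hty : ∃ ty ∈ Set.Icc a b, dist (σ sy) (γ ty) ≤ D + 1 ∧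
      (2 * D + 2 ≤ dist x0 (σ sy) ∨ dist (σ sy) (γ ty) = 0) := by
    by_cases h : s0 - R ≤ 0
    · have hsy' : sy = 0 := by rw [hsydef]; exact max_eq_right h
      have h0 : dist (σ sy) (γ a) = 0 := by rw [hsy', ← hσ.1]; simp
      exact ⟨a, ⟨le_refl _, hab⟩, by rw [h0]; linarith, Or.inr h0⟩
    · push_neg at h
      have hsy' : sy = s0 - R := by rw [hsydef]; exact max_eq_left (le_of_lt h)
      have hd : dist x0 (σ sy) = 2 * D + 2 := by
        rw [hx0, dσ s0 hs0mem sy hsymem, hsy', hRdef]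
        rw [abs_of_nonneg (by linarith)]; ring
      have hinf : Metric.infDist (σ sy) Γ < D + 1 := lt_of_le_of_lt (hDle sy hsymem) (by linarith)
      obtain ⟨p, ⟨ty, hty, rfl⟩, hp⟩ := (Metric.infDist_lt_iff hΓne).1 hinf
      exact ⟨ty, hty, le_of_lt hp, Or.inl (le_of_eq hd.symm)⟩
  have htz : ∃ tz ∈ Set.Icc a b, dist (σ sz) (γ tz) ≤ D + 1 ∧
      (2 * D + 2 ≤ dist x0 (σ sz) ∨ dist (σ sz) (γ tz) = 0) := by
    by_cases h : L ≤ s0 + R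
    · have hsz' : sz = L := by rw [hszdef]; exact min_eq_right h
      have h0 : dist (σ sz) (γ b) = 0 := by rw [hsz', ← hσ.2.1]; simp [hLdef]
      exact ⟨b, ⟨hab, le_refl _⟩, by rw [h0]; linarith, Or.inr h0⟩
    · push_neg at h
      have hsz' : sz = s0 + R := by rw [hszdef]; exact min_eq_left (le_of_lt h)
      have hd : dist x0 (σ sz) = 2 * D + 2 := by
        rw [hx0, dσ s0 hs0mem sz hszmem, hsz', hRdef]
        rw [abs_of_nonpos (by linarith), neg_sub]; ring
      have hinf : Metric.infDist (σ sz) Γ < D + 1 := lt_of_le_of_lt (hDle sz hszmem) (by linarith)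
      obtain ⟨p, ⟨tz, htz, rfl⟩, hp⟩ := (Metric.infDist_lt_iff hΓne).1 hinf
      exact ⟨tz, htz, le_of_lt hp, Or.inl (le_of_eq hd.symm)⟩
  obtain ⟨ty, htymem, htyd, htyalt⟩ := hty
  obtain ⟨tz, htzmem, htzd, htzalt⟩ := htz
  obtain ⟨g1, hg1⟩ := hgeo (σ sy) (γ ty)
  obtain ⟨g3, hg3⟩ := hgeo (γ tz) (σ sz)
  set T1 : ℝ := dist (σ sy) (γ ty) with hT1def
  set T2 : ℝ := |tz - ty| with hT2def
  set T3 : ℝ := dist (γ tz) (σ sz) with hT3def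
  have hT10 : 0 ≤ T1 := dist_nonneg
  have hT20 : 0 ≤ T2 := abs_nonneg _
  have hT30 : 0 ≤ T3 := dist_nonneg
  set T : ℝ := T1 + T2 + T3 with hTdef
  have hT0 : 0 ≤ T := by positivity
  -- the middle parametrization
  set μ : ℝ → ℝ := fun v => if ty ≤ tz then ty + v else ty - v with hμdef
  have hμ0 : μ 0 = ty := by rw [hμdef]; split <;> ring
  have hμT2 : μ T2 = tz := by
    rw [hμdef, hT2def]
    split
    · rw [abs_of_nonneg (by linarith)]; ring
    · rw [abs_of_nonpos (by linarith)]; ring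
  have hμmem : ∀ v ∈ Set.Icc (0:ℝ) T2, μ v ∈ Set.Icc a b := by
    intro v hv
    have hv1 : 0 ≤ v := hv.1
    have hv2 : v ≤ |tz - ty| := by rw [← hT2def]; exact hv.2
    rw [hμdef]
    dsimp only
    split
    · rename_i hc
      rw [abs_of_nonneg (by linarith)] at hv2
      exact ⟨le_trans htymem.1 (by linarith), by linarith [htzmem.2]⟩
    · rename_i hc
      push_neg at hc
      rw [abs_of_nonpos (by linarith)] at hv2
      exact ⟨by linarith [htzmem.1], le_trans (by linarith) htymem.2⟩
  have hμdist : ∀ v w, |μ v - μ w| = |v - w| := by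
    intro v w
    rw [hμdef]
    split
    · congr 1; ring
    · rw [show ty - v - (ty - w) = -(v - w) by ring, abs_neg]
  -- the concatenated path
  set F : ℝ → X := fun u =>
    if u ≤ T1 then g1 u else if u ≤ T1 + T2 then γ (μ (u - T1)) else g3 (u - T1 - T2) with hFdef
  have hFeq1 : ∀ u, u ≤ T1 → F u = g1 u := by
    intro u hu; simp only [hFdef]; rw [if_pos hu]
  have hFeq2 : ∀ u, ¬ u ≤ T1 → u ≤ T1 + T2 → F u = γ (μ (u - T1)) := by
    intro u h1 h2; simp only [hFdef]; rw [if_neg h1, if_pos h2]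
  have hFeq3 : ∀ u, ¬ u ≤ T1 → ¬ u ≤ T1 + T2 → F u = g3 (u - T1 - T2) := by
    intro u h1 h2; simp only [hFdef]; rw [if_neg h1, if_neg h2]
  have hF0 : F 0 = σ sy := by rw [hFeq1 0 hT10]; exact hg1.1
  have hg1T1 : g1 T1 = γ ty := hg1.2.1
  have hg3T3 : g3 T3 = σ sz := hg3.2.1
  have hFT : F T = σ sz := by
    by_cases h3 : 0 < T3
    · rw [hFeq3 T (by rw [hTdef]; push_neg; linarith) (by rw [hTdef]; push_neg; linarith)]
      rw [show T - T1 - T2 = T3 by rw [hTdef]; ring]; exact hg3T3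
    · have h3' : T3 = 0 := le_antisymm (by linarith) hT30
      have hzz : γ tz = σ sz := dist_eq_zero.mp h3'
      by_cases h2 : 0 < T2
      · rw [hFeq2 T (by rw [hTdef]; push_neg; linarith) (by rw [hTdef]; linarith)]
        rw [show T - T1 = T2 by rw [hTdef, h3']; ring, hμT2]; exact hzz
      · have h2' : T2 = 0 := le_antisymm (by linarith) hT20
        rw [hFeq1 T (by rw [hTdef, h2', h3']; linarith)]
        rw [show T = T1 by rw [hTdef, h2', h3']; ring, hg1T1]
        have htzty : tz = ty := by
          have : |tz - ty| = 0 := by rw [← hT2def]; exact h2'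
          have := abs_eq_zero.mp this; linarith
        rw [← htzty]; exact hzz
  -- coarse Lipschitz property of the concatenation
  have hg1d : ∀ p ∈ Set.Icc (0:ℝ) T1, ∀ q ∈ Set.Icc (0:ℝ) T1, dist (g1 p) (g1 q) = |p - q| :=
    hg1.2.2
  have hg3d : ∀ p ∈ Set.Icc (0:ℝ) T3, ∀ q ∈ Set.Icc (0:ℝ) T3, dist (g3 p) (g3 q) = |p - q| :=
    hg3.2.2
  have hg10 : g1 0 = σ sy := hg1.1
  have hg30 : g3 0 = γ tz := hg3.1
  have hγty : dist (γ ty) (γ tz) ≤ lam * T2 + S := by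
    have := (hγ ty htymem tz htzmem).2
    rwa [abs_sub_comm, ← hT2def] at this
  have haux : ∀ u ∈ Set.Icc (0:ℝ) T, ∀ v ∈ Set.Icc (0:ℝ) T, u ≤ v →
      dist (F u) (F v) ≤ lam * (v - u) + S := by
    intro u hu v hv huv
    by_cases hu1 : u ≤ T1
    · by_cases hv1 : v ≤ T1
      · rw [hFeq1 u hu1, hFeq1 v hv1, hg1d u ⟨hu.1, hu1⟩ v ⟨hv.1, hv1⟩,
          abs_of_nonpos (by linarith)]
        nlinarith
      · have hd1 : dist (g1 u) (g1 T1) = T1 - u := by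
          rw [hg1d u ⟨hu.1, hu1⟩ T1 ⟨hT10, le_refl _⟩, abs_of_nonpos (by linarith)]; ring
        by_cases hv2 : v ≤ T1 + T2
        · rw [hFeq2 v hv1 hv2, hFeq1 u hu1]
          have hmid : dist (γ ty) (γ (μ (v - T1))) ≤ lam * (v - T1) + S := by
            have := (hγ ty htymem (μ (v - T1))
              (hμmem _ ⟨by linarith [not_le.mp hv1], by linarith⟩)).2
            have harg : |ty - μ (v - T1)| = v - T1 := by
              rw [← hμ0, hμdist]
              rw [abs_of_nonpos (by linarith [not_le.mp hv1])]; ring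
            rw [harg] at this; exact this
          calc dist (g1 u) (γ (μ (v - T1)))
              ≤ dist (g1 u) (g1 T1) + dist (g1 T1) (γ (μ (v - T1))) := dist_triangle _ _ _
            _ = (T1 - u) + dist (γ ty) (γ (μ (v - T1))) := by rw [hd1, hg1T1]
            _ ≤ (T1 - u) + (lam * (v - T1) + S) := by linarith
            _ ≤ lam * (v - u) + S := by nlinarith
        · rw [hFeq3 v hv1 hv2, hFeq1 u hu1]
          have hvT : v - T1 - T2 ∈ Set.Icc (0:ℝ) T3 :=
            ⟨by linarith [not_le.mp hv2], by rw [hTdef] at hv; linarith [hv.2]⟩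
          have hd3 : dist (g3 0) (g3 (v - T1 - T2)) = v - T1 - T2 := by
            rw [hg3d 0 ⟨le_refl _, hT30⟩ _ hvT, abs_of_nonpos (by linarith [hvT.1])]; ring
          calc dist (g1 u) (g3 (v - T1 - T2))
              ≤ dist (g1 u) (g1 T1) + dist (g1 T1) (g3 0) + dist (g3 0) (g3 (v - T1 - T2)) :=
                dist_triangle4 _ _ _ _
            _ = (T1 - u) + dist (γ ty) (γ tz) + (v - T1 - T2) := by rw [hd1, hd3, hg1T1, hg30]
            _ ≤ (T1 - u) + (lam * T2 + S) + (v - T1 - T2) := by linarith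
            _ ≤ lam * (v - u) + S := by
                have h1 := not_le.mp hv2
                have h2 := not_le.mp hv1
                nlinarith [mul_nonneg (sub_nonneg.mpr hlam) (sub_nonneg.mpr hu1), mul_nonneg (sub_nonneg.mpr hlam) hT20]
    · by_cases hu2 : u ≤ T1 + T2
      · by_cases hv2 : v ≤ T1 + T2
        · rw [hFeq2 u hu1 hu2, hFeq2 v (by intro h; exact hu1 (huv.trans h)) hv2]
          have := (hγ (μ (u - T1)) (hμmem _ ⟨by linarith [not_le.mp hu1], by linarith⟩)
            (μ (v - T1)) (hμmem _ ⟨by linarith [not_le.mp hu1], by linarith⟩)).2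
          rw [hμdist, show u - T1 - (v - T1) = u - v by ring,
            abs_of_nonpos (by linarith)] at this
          linarith
        · rw [hFeq2 u hu1 hu2, hFeq3 v (by intro h; exact hu1 (huv.trans h)) hv2]
          have hvT : v - T1 - T2 ∈ Set.Icc (0:ℝ) T3 :=
            ⟨by linarith [not_le.mp hv2], by rw [hTdef] at hv; linarith [hv.2]⟩
          have hd3 : dist (g3 0) (g3 (v - T1 - T2)) = v - T1 - T2 := by
            rw [hg3d 0 ⟨le_refl _, hT30⟩ _ hvT, abs_of_nonpos (by linarith [hvT.1])]; ring
          have hmid : dist (γ (μ (u - T1))) (γ tz) ≤ lam * (T1 + T2 - u) + S := by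
            have := (hγ (μ (u - T1)) (hμmem _ ⟨by linarith [not_le.mp hu1], by linarith⟩)
              tz htzmem).2
            have harg : |μ (u - T1) - tz| = T1 + T2 - u := by
              rw [← hμT2, hμdist, abs_of_nonpos (by linarith)]; ring
            rw [harg] at this; exact this
          calc dist (γ (μ (u - T1))) (g3 (v - T1 - T2))
              ≤ dist (γ (μ (u - T1))) (g3 0) + dist (g3 0) (g3 (v - T1 - T2)) :=
                dist_triangle _ _ _
            _ = dist (γ (μ (u - T1))) (γ tz) + (v - T1 - T2) := by rw [hd3, hg30]
            _ ≤ (lam * (T1 + T2 - u) + S) + (v - T1 - T2) := by linarith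
            _ ≤ lam * (v - u) + S := by nlinarith [not_le.mp hv2]
      · have hv2 : ¬ v ≤ T1 + T2 := by intro h; exact hu2 (huv.trans h)
        rw [hFeq3 u hu1 hu2, hFeq3 v (by intro h; exact hu1 (huv.trans h)) hv2]
        have huT : u - T1 - T2 ∈ Set.Icc (0:ℝ) T3 :=
          ⟨by linarith [not_le.mp hu2], by rw [hTdef] at hu; linarith [hu.2]⟩
        have hvT : v - T1 - T2 ∈ Set.Icc (0:ℝ) T3 :=
          ⟨by linarith [not_le.mp hv2], by rw [hTdef] at hv; linarith [hv.2]⟩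
        rw [hg3d _ huT _ hvT, show u - T1 - T2 - (v - T1 - T2) = u - v by ring,
          abs_of_nonpos (by linarith)]
        nlinarith
  have hFlipschitz : ∀ u ∈ Set.Icc (0:ℝ) T, ∀ v ∈ Set.Icc (0:ℝ) T,
      dist (F u) (F v) ≤ lam * |u - v| + S := by
    intro u hu v hv
    rcases le_total u v with h | h
    · rw [abs_of_nonpos (by linarith)]
      have := haux u hu v hv h; rw [show -(u - v) = v - u by ring]; exact this
    · rw [abs_of_nonneg (by linarith), dist_comm]
      exact haux v hv u hu h
  -- the geodesic between F 0 and F T is a piece of σ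
  have hdsysz : dist (σ sy) (σ sz) = sz - sy := by
    rw [dσ sy hsymem sz hszmem, abs_of_nonpos (by linarith)]; ring
  set σc : ℝ → X := fun w => σ (sy + w) with hσcdef
  have hσc : IsGeodesicSegment σc (F 0) (F T) := by
    rw [hF0, hFT]
    refine ⟨by simp [hσcdef], ?_, ?_⟩
    · rw [hdsysz]; show σ (sy + (sz - sy)) = σ sz; congr 1; ring
    · intro p hp q hq
      rw [hdsysz] at hp hq
      show dist (σ (sy + p)) (σ (sy + q)) = _
      rw [dσ (sy + p) ⟨by linarith [hp.1], by linarith [hp.2, hszL]⟩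
        (sy + q) ⟨by linarith [hq.1], by linarith [hq.2, hszL]⟩]
      congr 1; ring
  have hx0mem : s0 - sy ∈ Set.Icc (0:ℝ) (dist (F 0) (F T)) := by
    rw [hF0, hFT, hdsysz]; exact ⟨by linarith, by linarith⟩
  have hchain := contraction hgeo hthin hδ hlam hS ⌈T⌉₊ F T hT0 (Nat.le_ceil T)
    hFlipschitz σc hσc (s0 - sy) hx0mem
  have hx0eq : σc (s0 - sy) = x0 := by
    show σ (sy + (s0 - sy)) = σ s0; congr 1; ring
  rw [hx0eq] at hchain
  -- every point of the concatenated path is far from x0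
  have hT1b : T1 ≤ D + 1 := htyd
  have hT3b : T3 ≤ D + 1 := by rw [hT3def, dist_comm]; exact htzd
  have hlbF : D - 1 ≤ Metric.infDist x0 (F '' Set.Icc 0 T) := by
    refine le_infDist' ⟨F 0, 0, ⟨le_refl _, hT0⟩, rfl⟩ ?_
    rintro _ ⟨u, hu, rfl⟩
    by_cases hu1 : u ≤ T1
    · rw [hFeq1 u hu1]
      rcases htyalt with hfar | hzero
      · have hd0u : dist (g1 0) (g1 u) = u := by
          rw [hg1d 0 ⟨le_refl _, hT10⟩ u ⟨hu.1, hu1⟩, abs_of_nonpos (by linarith [hu.1])]; ring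
        have htri := dist_triangle x0 (g1 u) (g1 0)
        rw [dist_comm (g1 u) (g1 0), hd0u, hg10] at htri
        linarith
      · have hT1z : T1 = 0 := hzero
        have huz : u = 0 := le_antisymm (by linarith [hu.1, hT1z ▸ hu1]) hu.1
        have : g1 u = γ ty := by
          rw [huz, hg10]; exact dist_eq_zero.mp hzero
        rw [this]; exact hlbΓ ty htymem
    · by_cases hu2 : u ≤ T1 + T2
      · rw [hFeq2 u hu1 hu2]
        exact hlbΓ _ (hμmem _ ⟨by linarith [not_le.mp hu1], by linarith⟩)
      · rw [hFeq3 u hu1 hu2]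
        rcases htzalt with hfar | hzero
        · have hwT : u - T1 - T2 ∈ Set.Icc (0:ℝ) T3 :=
            ⟨by linarith [not_le.mp hu2], by rw [hTdef] at hu; linarith [hu.2]⟩
          have hd0u : dist (g3 (u - T1 - T2)) (g3 T3) = T3 - (u - T1 - T2) := by
            rw [hg3d _ hwT T3 ⟨hT30, le_refl _⟩, abs_of_nonpos (by linarith [hwT.2])]; ring
          have htri := dist_triangle x0 (g3 (u - T1 - T2)) (g3 T3)
          rw [hd0u, hg3T3] at htri
          have : T3 - (u - T1 - T2) ≤ D + 1 := by linarith [hwT.1]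
          linarith
        · have hT3z : T3 = 0 := by rw [hT3def, dist_comm]; exact hzero
          exfalso
          rw [hTdef, hT3z] at hu
          exact hu2 (by linarith [hu.2])
  have hmain : D - 1 ≤ δ * (Nat.clog 2 ⌈T⌉₊) + (lam + S) := hlbF.trans hchain
  -- bound on T
  have hT2b : T2 ≤ lam * (6 * D + 6 + S) := by
    have hlow := (hγ ty htymem tz htzmem).1
    have hdtt : dist (γ ty) (γ tz) ≤ T1 + (sz - sy) + T3 := by
      have htri := dist_triangle4 (γ ty) (σ sy) (σ sz) (γ tz)
      rw [dist_comm (γ ty) (σ sy), dist_comm (σ sz) (γ tz), hdsysz, ← hT1def, ← hT3def] at htri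
      exact htri
    have hlam0 : (0:ℝ) < lam := by linarith
    have habs : |ty - tz| ≤ lam * (dist (γ ty) (γ tz) + S) := by
      have h1 : lam⁻¹ * |ty - tz| ≤ dist (γ ty) (γ tz) + S := by linarith
      calc |ty - tz| = lam * (lam⁻¹ * |ty - tz|) := by field_simp
        _ ≤ lam * (dist (γ ty) (γ tz) + S) := mul_le_mul_of_nonneg_left h1 hlam0.le
    have hdle : dist (γ ty) (γ tz) + S ≤ 6 * D + 6 + S := by
      have h2 : sz - sy ≤ 4 * D + 4 := by rw [hRdef] at hszsy; linarith
      linarith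
    have : |ty - tz| ≤ lam * (6 * D + 6 + S) :=
      habs.trans (mul_le_mul_of_nonneg_left hdle hlam0.le)
    rw [hT2def, abs_sub_comm]; exact this
  have hlam0 : (0:ℝ) < lam := by linarith
  have hTb : T ≤ C1 lam S * D := by
    rw [hTdef]
    have h8 : T1 + T2 + T3 ≤ (2 * D + 2) + lam * (6 * D + 6 + S) := by linarith
    refine h8.trans ?_
    unfold C1
    nlinarith [mul_nonneg (mul_nonneg hlam0.le hS.le) (sub_nonneg.mpr hD1.le),
      mul_nonneg (sub_nonneg.mpr hlam) (show (0:ℝ) ≤ 10 * D - 6 by linarith)]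
  set N : ℕ := ⌈T⌉₊ with hNdef
  have hC1 := C1_ge hlam hS
  have hNle : (N : ℝ) ≤ (C1 lam S + 1) * D := by
    have hc : (N : ℝ) < T + 1 := Nat.ceil_lt_add_one hT0
    nlinarith
  by_cases hN1 : N ≤ 1
  · have hclog0 : Nat.clog 2 N = 0 := by
      rcases Nat.le_one_iff_eq_zero_or_eq_one.mp hN1 with h | h <;> rw [h] <;> simp
    rw [hclog0] at hmain
    have := D0_ge hδ hlam hS
    simp only [Nat.cast_zero, mul_zero, zero_add] at hmain
    linarith
  · push_neg at hN1
    set k : ℕ := Nat.clog 2 N with hkdef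
    have hk1 : 1 ≤ k := Nat.clog_pos (by norm_num) hN1
    have hpow := Nat.pow_pred_clog_lt_self (b := 2) (by norm_num) (x := N) hN1
    have hpowR : (2:ℝ) ^ (k - 1 : ℕ) ≤ (N : ℝ) := by
      have hn : (2:ℕ) ^ (k - 1) ≤ N := le_of_lt hpow
      exact_mod_cast hn
    have hlogpow : ((k:ℝ) - 1) * Real.log 2 ≤ Real.log N := by
      have h2 : Real.log ((2:ℝ) ^ (k - 1 : ℕ)) ≤ Real.log N :=
        Real.log_le_log (by positivity) hpowR
      rw [Real.log_pow, Nat.cast_sub hk1] at h2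
      simpa using h2
    have hNpos : (0:ℝ) < N := by
      have : 0 < N := by omega
      exact_mod_cast this
    have hlogN : Real.log N ≤ C1 lam S + 2 * Real.sqrt D := by
      have h1 : Real.log N ≤ Real.log ((C1 lam S + 1) * D) := Real.log_le_log hNpos hNle
      have h2 : Real.log ((C1 lam S + 1) * D) = Real.log (C1 lam S + 1) + Real.log D :=
        Real.log_mul (by linarith) (by linarith)
      have h3 : Real.log (C1 lam S + 1) ≤ C1 lam S := by
        have := Real.log_le_sub_one_of_pos (show (0:ℝ) < C1 lam S + 1 by linarith)
        linarith
      have h4 : Real.log D ≤ 2 * Real.sqrt D := by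
        have hs := Real.log_sqrt (show (0:ℝ) ≤ D by linarith)
        have hs2 := Real.log_le_sub_one_of_pos (Real.sqrt_pos.mpr (show (0:ℝ) < D by linarith))
        linarith
      linarith
    have hlog2 : (1:ℝ)/2 ≤ Real.log 2 := by linarith [Real.log_two_gt_d9]
    have hklog : (k:ℝ) ≤ 2 * Real.log N + 1 := by
      have hk0 : (0:ℝ) ≤ (k:ℝ) - 1 := by
        have : (1:ℝ) ≤ (k:ℝ) := by exact_mod_cast hk1
        linarith
      have hmm := mul_le_mul_of_nonneg_left hlog2 hk0
      linarith only [hmm, hlogpow]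
    have hsq0 : (0:ℝ) ≤ Real.sqrt D := Real.sqrt_nonneg D
    have hfinal : D ≤ C2 δ lam S + 4 * δ * Real.sqrt D := by
      have h5 : δ * (k:ℝ) ≤ δ * (2 * Real.log N + 1) := mul_le_mul_of_nonneg_left hklog hδ
      have h6 : δ * (2 * Real.log N + 1) ≤ δ * (2 * (C1 lam S + 2 * Real.sqrt D) + 1) :=
        mul_le_mul_of_nonneg_left (by linarith) hδ
      have h7 : δ * (2 * (C1 lam S + 2 * Real.sqrt D) + 1) =
          2 * δ * C1 lam S + 4 * δ * Real.sqrt D + δ := by ring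
      unfold C2
      linarith only [hmain, h5, h6, h7, hlogN, hδ, mul_le_mul_of_nonneg_left hlogN hδ]
    set r : ℝ := Real.sqrt D with hrdef
    have hr2 : r ^ 2 = D := Real.sq_sqrt (by linarith)
    have h0r : (0:ℝ) ≤ r := by rw [hrdef]; exact Real.sqrt_nonneg D
    have hr1 : (1:ℝ) ≤ r := by
      rw [hrdef, show (1:ℝ) = Real.sqrt 1 by simp]
      exact Real.sqrt_le_sqrt (by linarith only [hD1])
    have hC2 := C2_ge hδ hlam hS
    have hrle : r ≤ C2 δ lam S + 4 * δ := by
      by_contra hcon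
      push_neg at hcon
      have hx1 : C2 δ lam S ≤ C2 δ lam S * r :=
        le_mul_of_one_le_right (by linarith only [hC2]) hr1
      have hx2 : (C2 δ lam S + 4 * δ) * r < r * r :=
        mul_lt_mul_of_pos_right hcon (by linarith only [hr1])
      nlinarith only [hfinal, hr2, hx1, hx2]
    have hfin : D ≤ (C2 δ lam S + 4 * δ) ^ 2 := by
      rw [← hr2]
      exact pow_le_pow_left₀ h0r hrle 2
    unfold D0
    linarith only [hfin, hS, hlam]

noncomputable def D1 (δ lam S : ℝ) : ℝ :=
  lam * (lam * (2 * D0 δ lam S + 3 + S) + lam * S) + S + D0 δ lam S + 1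

lemma D0_nonneg (hδ : 0 ≤ δ) (hlam : 1 ≤ lam) (hS : 0 < S) : 0 ≤ D0 δ lam S := by
  have := D0_ge (δ := δ) hδ hlam hS; linarith

lemma D1_ge (hδ : 0 ≤ δ) (hlam : 1 ≤ lam) (hS : 0 < S) :
    D0 δ lam S + 1 ≤ D1 δ lam S := by
  have h0 := D0_nonneg (δ := δ) hδ hlam hS
  have hlam0 : (0:ℝ) ≤ lam := by linarith
  have hin : (0:ℝ) ≤ lam * (2 * D0 δ lam S + 3 + S) + lam * S := by
    have := mul_nonneg hlam0 (show (0:ℝ) ≤ 2 * D0 δ lam S + 3 + S by linarith)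
    have := mul_nonneg hlam0 hS.le
    linarith
  have := mul_nonneg hlam0 hin
  unfold D1; linarith

lemma D1_pos (hδ : 0 ≤ δ) (hlam : 1 ≤ lam) (hS : 0 < S) : 0 < D1 δ lam S := by
  have := D1_ge (δ := δ) hδ hlam hS
  have := D0_nonneg (δ := δ) hδ hlam hS
  linarith

set_option maxHeartbeats 1000000 in
/-- **Part 2**: the images of a quasi-geodesic and of a geodesic with the same endpoints
are at Hausdorff distance at most `D1`. -/
lemma part2 (hgeo : GeodesicSpace X) (hthin : ThinTriangles X δ)
    (hδ : 0 ≤ δ) (hlam : 1 ≤ lam) (hS : 0 < S)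
    {a b : ℝ} (hab : a ≤ b) {γ : ℝ → X} (hγ : IsQuasiGeodesicOn lam S γ a b)
    {σ : ℝ → X} (hσ : IsGeodesicSegment σ (γ a) (γ b)) :
    Metric.hausdorffDist (γ '' Set.Icc a b) (σ '' Set.Icc 0 (dist (γ a) (γ b)))
      ≤ D1 δ lam S := by
  classical
  set L : ℝ := dist (γ a) (γ b) with hLdef
  set Γ : Set X := γ '' Set.Icc a b with hΓdef
  have hΓne : Γ.Nonempty := ⟨γ a, a, ⟨le_refl _, hab⟩, rfl⟩
  have hL0 : 0 ≤ L := dist_nonneg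
  have dσ : ∀ p ∈ Set.Icc (0:ℝ) L, ∀ q ∈ Set.Icc (0:ℝ) L, dist (σ p) (σ q) = |p - q| := hσ.2.2
  have h1 := part1 hgeo hthin hδ hlam hS hab hγ hσ
  set D0' : ℝ := D0 δ lam S with hD0'def
  have hD0'0 : 0 ≤ D0' := D0_nonneg hδ hlam hS
  have hlam0 : (0:ℝ) < lam := by linarith
  set J : ℝ := lam * (2 * D0' + 3 + S) with hJdef
  have hJ0 : 0 ≤ J := by
    have := mul_nonneg hlam0.le (show (0:ℝ) ≤ 2 * D0' + 3 + S by linarith)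
    rw [hJdef]; linarith
  -- choose nearby points on the quasi-geodesic for each unit-step point on the geodesic
  have hex : ∀ i : ℕ, ∃ t, t ∈ Set.Icc a b ∧ dist (σ (min (i:ℝ) L)) (γ t) ≤ D0' + 1 := by
    intro i
    have hmem : min (i:ℝ) L ∈ Set.Icc (0:ℝ) L := ⟨le_min (Nat.cast_nonneg i) hL0, min_le_right _ _⟩
    have hlt : Metric.infDist (σ (min (i:ℝ) L)) Γ < D0' + 1 := by
      have := h1 _ hmem; linarith
    obtain ⟨p, ⟨t, ht, rfl⟩, hp⟩ := (Metric.infDist_lt_iff hΓne).1 hlt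
    exact ⟨t, ht, hp.le⟩
  choose v hv1 hv2 using hex
  set N : ℕ := ⌈L⌉₊ with hNdef
  set u : ℕ → ℝ := fun i => if i = 0 then a else if N ≤ i then b else v i with hudef
  have hu0 : u 0 = a := by simp [hudef]
  have huN : ∀ i, N ≤ i → u i = b ∨ u i = a := by
    intro i hi
    simp only [hudef]
    by_cases h0 : i = 0
    · exact Or.inr (by rw [if_pos h0])
    · exact Or.inl (by rw [if_neg h0, if_pos hi])
  have hu_mem : ∀ i, u i ∈ Set.Icc a b := by
    intro i
    simp only [hudef]
    split
    · exact ⟨le_refl _, hab⟩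
    · split
      · exact ⟨hab, le_refl _⟩
      · exact hv1 i
  have hu_close : ∀ i : ℕ, dist (σ (min (i:ℝ) L)) (γ (u i)) ≤ D0' + 1 := by
    intro i
    simp only [hudef]
    split
    · rename_i h0
      subst h0
      have : min ((0:ℕ):ℝ) L = 0 := by simp [hL0]
      rw [this, hσ.1]
      simp; linarith
    · split
      · rename_i h0 hNi
        have hLN : L ≤ (i:ℝ) := by
          have := Nat.le_ceil L
          have h2 : (N:ℝ) ≤ (i:ℝ) := by exact_mod_cast hNi
          rw [hNdef] at *; linarith
        have : min (i:ℝ) L = L := min_eq_right hLN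
        rw [this, hσ.2.1]
        simp; linarith
      · exact hv2 i
  have hu_jump : ∀ i : ℕ, |u (i+1) - u i| ≤ J := by
    intro i
    have hmin1 : min ((i:ℝ)) L ∈ Set.Icc (0:ℝ) L := ⟨le_min (Nat.cast_nonneg i) hL0, min_le_right _ _⟩
    have hmin2 : min (((i:ℕ)+1:ℕ):ℝ) L ∈ Set.Icc (0:ℝ) L :=
      ⟨le_min (Nat.cast_nonneg _) hL0, min_le_right _ _⟩
    have hstep : dist (σ (min (i:ℝ) L)) (σ (min (((i:ℕ)+1:ℕ):ℝ) L)) ≤ 1 := by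
      rw [dσ _ hmin1 _ hmin2]
      have hcast : (((i:ℕ)+1:ℕ):ℝ) = (i:ℝ) + 1 := by push_cast; ring
      rw [hcast]
      rw [abs_le]
      constructor
      · rcases min_cases ((i:ℝ)+1) L with ⟨h1', h2'⟩ | ⟨h1', h2'⟩ <;>
          rcases min_cases ((i:ℝ)) L with ⟨h3', h4'⟩ | ⟨h3', h4'⟩ <;> rw [h1', h3'] <;> linarith
      · rcases min_cases ((i:ℝ)+1) L with ⟨h1', h2'⟩ | ⟨h1', h2'⟩ <;>
          rcases min_cases ((i:ℝ)) L with ⟨h3', h4'⟩ | ⟨h3', h4'⟩ <;> rw [h1', h3'] <;> linarith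
    have hd : dist (γ (u i)) (γ (u (i+1))) ≤ 2 * D0' + 3 := by
      have htri := dist_triangle4 (γ (u i)) (σ (min (i:ℝ) L)) (σ (min (((i:ℕ)+1:ℕ):ℝ) L)) (γ (u (i+1)))
      have hc1 := hu_close i
      have hc2 := hu_close (i+1)
      rw [dist_comm (γ (u i)) (σ (min (i:ℝ) L))] at htri
      linarith
    have hlow := (hγ (u i) (hu_mem i) (u (i+1)) (hu_mem (i+1))).1
    have : lam⁻¹ * |u i - u (i+1)| ≤ 2 * D0' + 3 + S := by linarith
    have habs : |u i - u (i+1)| ≤ lam * (2 * D0' + 3 + S) := by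
      calc |u i - u (i+1)| = lam * (lam⁻¹ * |u i - u (i+1)|) := by field_simp
        _ ≤ lam * (2 * D0' + 3 + S) := mul_le_mul_of_nonneg_left this hlam0.le
    rw [abs_sub_comm] at habs
    rw [hJdef]; exact habs
  -- covering claim
  have hcov : ∀ t ∈ Set.Icc a b, ∃ i : ℕ, |t - u i| ≤ J + lam * S := by
    intro t ht
    set P : ℕ → Prop := fun i => u i ≤ t with hPdef
    have hP0 : P 0 := by rw [hPdef]; dsimp only; rw [hu0]; exact ht.1
    set i₀ : ℕ := Nat.findGreatest P N with hi₀def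
    have hPi₀ : P i₀ := Nat.findGreatest_spec (Nat.zero_le N) hP0
    have hui₀ : u i₀ ≤ t := hPi₀
    by_cases hiN : i₀ = N
    · by_cases hN0 : N = 0
      · -- degenerate: L = 0
        have hL0' : L = 0 := by
          have : L ≤ 0 := by
            have := Nat.ceil_eq_zero.mp (hNdef ▸ hN0)
            exact this
          linarith
        have hba : b - a ≤ lam * S := by
          have hlow := (hγ a ⟨le_refl _, hab⟩ b ⟨hab, le_refl _⟩).1
          have hd0 : dist (γ a) (γ b) = 0 := hL0'
          rw [hd0, abs_sub_comm, abs_of_nonneg (by linarith : (0:ℝ) ≤ b - a)] at hlow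
          have : lam⁻¹ * (b - a) ≤ S := by linarith
          calc b - a = lam * (lam⁻¹ * (b - a)) := by field_simp
            _ ≤ lam * S := mul_le_mul_of_nonneg_left this hlam0.le
        refine ⟨0, ?_⟩
        rw [hu0, abs_of_nonneg (by linarith [ht.1])]
        have := ht.2
        linarith
      · refine ⟨i₀, ?_⟩
        have hub : u i₀ = b := by
          simp only [hudef]
          rw [if_neg (by omega : ¬ i₀ = 0), if_pos (by omega : N ≤ i₀)]
        rw [hub] at hui₀
        have hteq : t = b := le_antisymm ht.2 hui₀
        rw [hteq, hub]
        simp only [sub_self, abs_zero]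
        have hmlS : 0 ≤ lam * S := mul_nonneg hlam0.le hS.le
        linarith
    · have hlt : i₀ < N := lt_of_le_of_ne (Nat.findGreatest_le N) hiN
      have hk0 : Nat.findGreatest P N < i₀ + 1 := by rw [← hi₀def]; omega
      have hnP : ¬ P (i₀ + 1) := Nat.findGreatest_is_greatest hk0 (by omega)
      have : t < u (i₀ + 1) := by
        rw [hPdef] at hnP; dsimp only at hnP; linarith [not_le.mp hnP]
      refine ⟨i₀, ?_⟩
      have hj := hu_jump i₀
      rw [abs_of_nonneg (by linarith)]
      have : u (i₀+1) - u i₀ ≤ J := le_trans (le_abs_self _) hj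
      have hmlS : 0 ≤ lam * S := mul_nonneg hlam0.le hS.le
      linarith
  -- conclude
  have hdir2 : ∀ t ∈ Set.Icc a b,
      Metric.infDist (γ t) (σ '' Set.Icc 0 L) ≤ D1 δ lam S := by
    intro t ht
    obtain ⟨i, hi⟩ := hcov t ht
    have hmem : σ (min (i:ℝ) L) ∈ σ '' Set.Icc 0 L :=
      ⟨min (i:ℝ) L, ⟨le_min (Nat.cast_nonneg i) hL0, min_le_right _ _⟩, rfl⟩
    have hdist : dist (γ t) (σ (min (i:ℝ) L)) ≤ lam * (J + lam * S) + S + (D0' + 1) := by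
      have htri := dist_triangle (γ t) (γ (u i)) (σ (min (i:ℝ) L))
      have hupper := (hγ t ht (u i) (hu_mem i)).2
      have habs : |t - u i| ≤ J + lam * S := hi
      have h1' : dist (γ t) (γ (u i)) ≤ lam * (J + lam * S) + S := by
        have := mul_le_mul_of_nonneg_left habs hlam0.le
        linarith
      have h2' : dist (γ (u i)) (σ (min (i:ℝ) L)) ≤ D0' + 1 := by
        rw [dist_comm]; exact hu_close i
      linarith
    refine le_trans (Metric.infDist_le_dist_of_mem hmem) ?_
    refine hdist.trans ?_
    unfold D1
    rw [← hD0'def]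
    have hexp : lam * (J + lam * S) = lam * (lam * (2 * D0' + 3 + S) + lam * S) := by
      rw [hJdef]
    linarith [hexp]
  have hdir1 : ∀ y ∈ σ '' Set.Icc 0 L, Metric.infDist y Γ ≤ D1 δ lam S := by
    rintro _ ⟨s, hs, rfl⟩
    refine (h1 s hs).trans ?_
    have := D1_ge (δ := δ) hδ hlam hS
    rw [← hD0'def] at this
    linarith
  refine Metric.hausdorffDist_le_of_infDist (le_of_lt (D1_pos hδ hlam hS)) ?_ ?_
  · rintro _ ⟨t, ht, rfl⟩
    exact hdir2 t ht
  · exact hdir1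

lemma qg_image_bounded {γ : ℝ → X} {a b : ℝ} (hlam : 1 ≤ lam) (hγ : IsQuasiGeodesicOn lam S γ a b)
    (hab : a ≤ b) : Bornology.IsBounded (γ '' Set.Icc a b) := by
  refine (Metric.isBounded_closedBall (x := γ a) (r := lam * (b - a) + S)).subset ?_
  rintro _ ⟨t, ht, rfl⟩
  rw [Metric.mem_closedBall]
  have := (hγ t ht a ⟨le_refl _, hab⟩).2
  have habs : |t - a| ≤ b - a := by
    rw [abs_of_nonneg (by linarith [ht.1])]; linarith [ht.2]
  nlinarith

lemma geo_image_bounded {σ : ℝ → X} {x y : X} (hσ : IsGeodesicSegment σ x y) :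
    Bornology.IsBounded (σ '' Set.Icc 0 (dist x y)) :=
  (geo_compact_image hσ).isBounded

end StabAux

/-- **Stability of geodesics.** In a `δ`-thin-hyperbolic geodesic metric space, for every
`λ ≥ 1` and `S > 0` there is a constant `H = H(δ, λ, S) > 0` such that any two
`(λ, S)`-quasi-geodesics with the same start- and endpoints have images at Hausdorff
distance at most `H` from each other. -/
theorem stability_of_geodesics (δ lam S : ℝ) (hδ : 0 ≤ δ) (hlam : 1 ≤ lam) (hS : 0 < S) :
    ∃ H : ℝ, 0 < H ∧
      ∀ (X : Type u) [inst : MetricSpace X], GeodesicSpace X → ThinTriangles X δ →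
        ∀ (a b a' b' : ℝ) (γ γ' : ℝ → X),
          IsQuasiGeodesicOn lam S γ a b → IsQuasiGeodesicOn lam S γ' a' b' →
          γ a = γ' a' → γ b = γ' b' →
          Metric.hausdorffDist (γ '' Set.Icc a b) (γ' '' Set.Icc a' b') ≤ H := by
  classical
  refine ⟨2 * StabAux.D1 δ lam S + 1, by linarith [StabAux.D1_pos hδ hlam hS], ?_⟩
  intro X inst hgeo hthin a b a' b' γ γ' hq hq' hst hen
  have hD1 := StabAux.D1_pos hδ hlam hS
  by_cases hab : a ≤ b
  · by_cases hab' : a' ≤ b'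
    · obtain ⟨σ, hσ⟩ := hgeo (γ a) (γ b)
      have hσ' : IsGeodesicSegment σ (γ' a') (γ' b') := by rw [← hst, ← hen]; exact hσ
      have h1 := StabAux.part2 hgeo hthin hδ hlam hS hab hq hσ
      have h2 := StabAux.part2 hgeo hthin hδ hlam hS hab' hq' hσ'
      have hdd : dist (γ' a') (γ' b') = dist (γ a) (γ b) := by rw [hst, hen]
      rw [hdd] at h2
      have hne1 : (γ '' Set.Icc a b).Nonempty := ⟨γ a, a, ⟨le_refl _, hab⟩, rfl⟩
      have hne3 : (σ '' Set.Icc 0 (dist (γ a) (γ b))).Nonempty :=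
        StabAux.geo_image_nonempty hσ
      have hfin : EMetric.hausdorffEdist (γ '' Set.Icc a b)
          (σ '' Set.Icc 0 (dist (γ a) (γ b))) ≠ ⊤ :=
        Metric.hausdorffEdist_ne_top_of_nonempty_of_bounded hne1 hne3
          (StabAux.qg_image_bounded hlam hq hab) (StabAux.geo_image_bounded hσ)
      calc Metric.hausdorffDist (γ '' Set.Icc a b) (γ' '' Set.Icc a' b')
          ≤ Metric.hausdorffDist (γ '' Set.Icc a b) (σ '' Set.Icc 0 (dist (γ a) (γ b))) +
            Metric.hausdorffDist (σ '' Set.Icc 0 (dist (γ a) (γ b))) (γ' '' Set.Icc a' b') :=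
            Metric.hausdorffDist_triangle hfin
        _ ≤ StabAux.D1 δ lam S + StabAux.D1 δ lam S := by
            refine add_le_add h1 ?_
            rw [Metric.hausdorffDist_comm]; exact h2
        _ ≤ 2 * StabAux.D1 δ lam S + 1 := by linarith
    · rw [Set.Icc_eq_empty hab', Set.image_empty, Metric.hausdorffDist_empty]
      linarith
  · rw [Set.Icc_eq_empty hab, Set.image_empty, Metric.hausdorffDist_empty']
    linarith
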